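/- arXiv:1110.4647 — 4 statements merged into one kernel-verified Lean document; each statement's English description precedes it below -/
import Mathlib

section
/- Let R be a commutative Noetherian ring of prime characteristic p whose reduction R_red = R/𝔫 (𝔫 the nilradical of R) is F-finite, and let M be an R-module. Then M_{*R} = (0 :_M 𝔫)_{*R_red}, where (0 :_M 𝔫) = {x ∈ M : 𝔫·x = 0} is regarded as an R_red-module and its tight interior over R_red is viewed as a submodule of M. -/
open scoped TensorProduct Pointwise

universe u v w

/-- `R°`: the set of elements of `R` not contained in any minimal prime. -/
def RCirc (R : Type u) [CommRing R] : Set R :=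
  {c | ∀ P ∈ minimalPrimes R, c ∉ P}

/-- An additive map `g : M →+ N` between `R`-modules is `e`-th Frobenius semilinear if
`g (r ^ (p ^ e) • x) = r • g x`; these are exactly the `R`-linear maps `{}^e M → N`. -/
def IsFrobSemilinear (p e : ℕ) (R : Type u) [CommRing R] {M : Type v} {N : Type w}
    [AddCommGroup M] [Module R M] [AddCommGroup N] [Module R N] (g : M →+ N) : Prop :=
  ∀ (r : R) (x : M), g ((r ^ p ^ e) • x) = r • g x

/-- `M_*[c, p^{e₀}]`: the submodule generated by all `g ({}^e c)` for `e ≥ e₀` and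
`g ∈ Hom_R({}^e R, M)`. -/
def tiAux (p : ℕ) (R : Type u) [CommRing R] (M : Type v) [AddCommGroup M] [Module R M]
    (c : R) (e₀ : ℕ) : Submodule R M :=
  Submodule.span R {x : M | ∃ e : ℕ, e₀ ≤ e ∧ ∃ g : R →+ M, IsFrobSemilinear p e R g ∧ x = g c}

/-- The tight interior `M_{*R}`. -/
def tightInterior (p : ℕ) (R : Type u) [CommRing R] (M : Type v) [AddCommGroup M]
    [Module R M] : Submodule R M :=
  ⨅ c ∈ RCirc R, ⨅ e₀ : ℕ, tiAux p R M c e₀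

/-- `R` is `F`-finite: `{}^1 R` is a finitely generated `R`-module. -/
def FFinite (p : ℕ) (R : Type u) [CommRing R] : Prop :=
  ∃ s : Finset R, ∀ x : R, ∃ c : R → R, x = ∑ y ∈ s, c y ^ p * y

/-- `c` is a co-test element: `c ∈ R°` and `M_* = M_*[c, 1]` for every `R`-module `M`. -/
def IsCoTestElement (p : ℕ) (R : Type u) [CommRing R] (c : R) : Prop :=
  c ∈ RCirc R ∧
    ∀ (M : Type v) [AddCommGroup M] [Module R M], tightInterior p R M = tiAux p R M c 0

/-- Strong `F`-regularity: for every `c ∈ R°` some `R`-linear `φ : {}^e R → R` sends `{}^e c`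
to `1`. -/
def StronglyFRegular (p : ℕ) (R : Type u) [CommRing R] : Prop :=
  ∀ c ∈ RCirc R, ∃ (e : ℕ) (g : R →+ R), IsFrobSemilinear p e R g ∧ g c = 1

/-- `R` is `F`-coregular if `M_* = M` for every `R`-module `M`. -/
def FCoregular (p : ℕ) (R : Type u) [CommRing R] : Prop :=
  ∀ (M : Type v) [AddCommGroup M] [Module R M], tightInterior p R M = ⊤

/-- `{}^e R`: the ring `R` viewed as an `R`-module via the `e`-th iterate of Frobenius. -/
def FrobAlg (_p _e : ℕ) (R : Type u) : Type u := R

instance (p e : ℕ) (R : Type u) [CommRing R] : AddCommGroup (FrobAlg p e R) :=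
  inferInstanceAs (AddCommGroup R)

noncomputable instance (p e : ℕ) (R : Type u) [CommRing R] [ExpChar R p] :
    Module R (FrobAlg p e R) :=
  Module.compHom R (iterateFrobenius R p e)

/-- The tight closure of zero in `N`: those `z` such that for some `c ∈ R°`,
`{}^e c ⊗ z = 0` in `{}^e R ⊗_R N` for all `e ≥ 0`. -/
def zeroTC (p : ℕ) (R : Type u) [CommRing R] [Fact p.Prime] [CharP R p]
    (N : Type v) [AddCommGroup N] [Module R N] : Set N :=
  {z | ∃ c ∈ RCirc R, ∀ e : ℕ,
    ((show FrobAlg p e R from c) ⊗ₜ[R] z : TensorProduct R (FrobAlg p e R) N) = 0}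

/-- The big test ideal `τ_b(R) = ⋂_N Ann_R (0*_N)`. -/
def bigTestIdeal (p : ℕ) (R : Type u) [CommRing R] [Fact p.Prime] [CharP R p] : Set R :=
  {r | ∀ (N : Type v) [AddCommGroup N] [Module R N], ∀ z ∈ zeroTC p R N, r • z = 0}

section Reduction

variable {R : Type u} [CommRing R]

lemma minimalPrimes_nilradical (R : Type u) [CommRing R] :
    (nilradical R).minimalPrimes = minimalPrimes R := by
  have h : nilradical R = (⊥ : Ideal R).radical := rfl
  rw [h, Ideal.radical_minimalPrimes, minimalPrimes]

lemma mem_RCirc_quot {c : R} (hc : c ∈ RCirc R) :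
    Ideal.Quotient.mk (nilradical R) c ∈ RCirc (R ⧸ nilradical R) := by
  intro P hP hcP
  have h2 : Ideal.comap (Ideal.Quotient.mk (nilradical R)) P ∈ minimalPrimes R := by
    rw [← minimalPrimes_nilradical, Ideal.minimalPrimes_eq_comap]
    exact ⟨P, hP, rfl⟩
  exact hc _ h2 (Ideal.mem_comap.mpr hcP)

lemma mem_RCirc_of_quot {c : R}
    (hc : Ideal.Quotient.mk (nilradical R) c ∈ RCirc (R ⧸ nilradical R)) : c ∈ RCirc R := by
  intro P hP hcP
  have h1 : P ∈ (nilradical R).minimalPrimes := by rw [minimalPrimes_nilradical]; exact hP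
  rw [Ideal.minimalPrimes_eq_comap] at h1
  obtain ⟨P', hP', rfl⟩ := h1
  exact hc P' hP' hcP

end Reduction

/-- Proposition 2.3: reduction to the reduced case. -/
theorem tightInterior_eq_tightInterior_red
    (p : ℕ) [Fact p.Prime] (R : Type u) [CommRing R] [IsNoetherianRing R] [CharP R p]
    (hred : FFinite p (R ⧸ nilradical R))
    (M : Type v) [AddCommGroup M] [Module R M] :
    (tightInterior p R M : Set M) =
      Subtype.val '' (tightInterior p (R ⧸ nilradical R)
        (Submodule.torsionBySet R M ↑(nilradical R)) :
          Set (Submodule.torsionBySet R M ↑(nilradical R))) := by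
    classical
  obtain ⟨N, hN⟩ := IsNoetherianRing.isNilpotent_nilradical R
  set e₁ := N + 1 with he₁
  have hp1 : 1 < p := (Fact.out : p.Prime).one_lt
  have hKle : ∀ e, e₁ ≤ e → N + 1 ≤ p ^ e := by
    intro e he
    calc N + 1 ≤ p ^ e₁ := Nat.le_of_lt (Nat.lt_pow_self (n := N + 1) hp1)
    _ ≤ p ^ e := Nat.pow_le_pow_right (le_of_lt hp1) he
  have hnil : ∀ n ∈ nilradical R, n ^ (N + 1) = 0 := by
    intro n hn
    have h1 : n ^ N ∈ (nilradical R) ^ N := Ideal.pow_mem_pow hn N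
    rw [hN] at h1
    have h2 : n ^ N = 0 := by simpa using h1
    rw [pow_succ, h2, zero_mul]
  have hpow : ∀ n ∈ nilradical R, ∀ e, e₁ ≤ e → n ^ p ^ e = 0 := by
    intro n hn e he
    have h3 : N + 1 ≤ p ^ e := hKle e he
    calc n ^ p ^ e = n ^ (N + 1) * n ^ (p ^ e - (N + 1)) := by
          rw [← pow_add]; congr 1; omega
    _ = 0 := by rw [hnil n hn, zero_mul]
  have himg : ∀ e : ℕ, e₁ ≤ e → ∀ g : R →+ M, IsFrobSemilinear p e R g →
      ∀ x : R, g x ∈ Submodule.torsionBySet R M ↑(nilradical R) := by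
    intro e he g hg x
    rw [Submodule.mem_torsionBySet_iff]
    rintro ⟨n, hn⟩
    have h4 := hg n x
    rw [hpow n hn e he, zero_smul, map_zero] at h4
    exact h4.symm
  ext x
  simp only [SetLike.mem_coe, Set.mem_image]
  constructor
  · intro hx
    have mem_ti : ∀ c ∈ RCirc R, ∀ e₀, x ∈ tiAux p R M c e₀ := by
      simp only [tightInterior, Submodule.mem_iInf] at hx
      exact hx
    have h1R : (1 : R) ∈ RCirc R := by
      intro P hP h1
      exact hP.1.1.ne_top ((Ideal.eq_top_iff_one _).mpr h1)
    have hx0 : x ∈ Submodule.torsionBySet R M ↑(nilradical R) := by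
      have h := mem_ti 1 h1R e₁
      refine Submodule.span_le.mpr ?_ h
      rintro y ⟨e, he, g, hg, rfl⟩
      exact himg e he g hg 1
    refine ⟨⟨x, hx0⟩, ?_, rfl⟩
    simp only [tightInterior, Submodule.mem_iInf]
    intro cq hcq e₀
    obtain ⟨c, rfl⟩ := Ideal.Quotient.mk_surjective cq
    have hc : c ∈ RCirc R := mem_RCirc_of_quot hcq
    have hd : c ^ p ^ e₁ ∈ RCirc R := by
      intro P hP hdP
      exact hc P hP (hP.1.1.mem_of_pow_mem _ hdP)
    have hmem := mem_ti (c ^ p ^ e₁) hd (e₀ + e₁)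
    set S : Submodule (R ⧸ nilradical R) (Submodule.torsionBySet R M ↑(nilradical R)) :=
      tiAux p (R ⧸ nilradical R) (Submodule.torsionBySet R M ↑(nilradical R))
        (Ideal.Quotient.mk (nilradical R) c) e₀ with hS
    let S' : Submodule R M :=
      { carrier := Subtype.val '' (S : Set (Submodule.torsionBySet R M ↑(nilradical R)))
        add_mem' := by
          rintro a b ⟨a', ha', rfl⟩ ⟨b', hb', rfl⟩
          exact ⟨a' + b', S.add_mem ha' hb', rfl⟩
        zero_mem' := ⟨0, S.zero_mem, rfl⟩
        smul_mem' := by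
          rintro r a ⟨a', ha', rfl⟩
          exact ⟨Ideal.Quotient.mk (nilradical R) r • a', S.smul_mem _ ha', rfl⟩ }
    have hsub : tiAux p R M (c ^ p ^ e₁) (e₀ + e₁) ≤ S' := by
      refine Submodule.span_le.mpr ?_
      rintro y ⟨e, he, g, hg, rfl⟩
      have he' : e₁ ≤ e := by omega
      set σ : (R ⧸ nilradical R) → R :=
        Function.surjInv (Ideal.Quotient.mk_surjective (I := nilradical R)) with hσdef
      have hσ : ∀ q, Ideal.Quotient.mk (nilradical R) (σ q) = q :=
        Function.surjInv_eq _
      have Fcoset : ∀ r r' : R,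
          Ideal.Quotient.mk (nilradical R) r = Ideal.Quotient.mk (nilradical R) r' →
          g (r ^ p ^ e₁) = g (r' ^ p ^ e₁) := by
        intro r r' hrr
        have hn : r' - r ∈ nilradical R := by
          rw [← neg_sub]
          exact (nilradical R).neg_mem ((Ideal.Quotient.eq).mp hrr)
        have key : r' ^ p ^ e₁ = r ^ p ^ e₁ := by
          have h5 : r' = r + (r' - r) := by ring
          rw [h5, add_pow_char_pow, hpow _ hn e₁ le_rfl, add_zero]
        rw [key]
      let h : (R ⧸ nilradical R) →+ (Submodule.torsionBySet R M ↑(nilradical R)) :=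
        { toFun := fun q => ⟨g ((σ q) ^ p ^ e₁), himg e he' g hg _⟩
          map_zero' := by
            apply Subtype.ext
            show g ((σ 0) ^ p ^ e₁) = 0
            rw [Fcoset (σ 0) 0 (by rw [hσ]; simp)]
            rw [zero_pow (by positivity), map_zero]
          map_add' := by
            intro q q'
            apply Subtype.ext
            show g ((σ (q + q')) ^ p ^ e₁) = g ((σ q) ^ p ^ e₁) + g ((σ q') ^ p ^ e₁)
            rw [Fcoset (σ (q + q')) (σ q + σ q') (by rw [hσ, map_add, hσ, hσ])]
            rw [add_pow_char_pow, map_add] }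
      have hsl : IsFrobSemilinear p (e - e₁) (R ⧸ nilradical R) h := by
        intro s y
        obtain ⟨t, rfl⟩ := Ideal.Quotient.mk_surjective s
        apply Subtype.ext
        show g ((σ ((Ideal.Quotient.mk (nilradical R) t ^ p ^ (e - e₁)) • y)) ^ p ^ e₁)
          = (((Ideal.Quotient.mk (nilradical R) t) •
              (⟨g ((σ y) ^ p ^ e₁), himg e he' g hg _⟩ :
                Submodule.torsionBySet R M ↑(nilradical R)) :
              Submodule.torsionBySet R M ↑(nilradical R)) : M)
        have hrhs : (((Ideal.Quotient.mk (nilradical R) t) •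
              (⟨g ((σ y) ^ p ^ e₁), himg e he' g hg _⟩ :
                Submodule.torsionBySet R M ↑(nilradical R)) :
              Submodule.torsionBySet R M ↑(nilradical R)) : M)
            = t • g ((σ y) ^ p ^ e₁) := by
          rw [Submodule.torsionBySet.mk_smul]
          rfl
        rw [hrhs]
        rw [Fcoset (σ _) (t ^ p ^ (e - e₁) * σ y)
          (by rw [hσ]; rw [smul_eq_mul, map_mul, map_pow, hσ])]
        rw [mul_pow, ← pow_mul]
        have hee : p ^ (e - e₁) * p ^ e₁ = p ^ e := by rw [← pow_add]; congr 1; omega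
        rw [hee]
        have h6 := hg t ((σ y) ^ p ^ e₁)
        rw [smul_eq_mul] at h6
        exact h6
      refine ⟨h (Ideal.Quotient.mk (nilradical R) c),
        Submodule.subset_span ⟨e - e₁, by omega, h, hsl, rfl⟩, ?_⟩
      show g ((σ (Ideal.Quotient.mk (nilradical R) c)) ^ p ^ e₁) = g (c ^ p ^ e₁)
      exact Fcoset _ c (hσ _)
    obtain ⟨z, hz, hzx⟩ := hsub hmem
    have hzz : z = ⟨x, hx0⟩ := Subtype.ext hzx
    rwa [hzz] at hz
  · rintro ⟨z, hz, rfl⟩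
    simp only [tightInterior, Submodule.mem_iInf] at hz ⊢
    intro c hc e₀
    have hcq := mem_RCirc_quot hc
    have hz' := hz _ hcq e₀
    let T : Submodule (R ⧸ nilradical R) (Submodule.torsionBySet R M ↑(nilradical R)) :=
      { carrier := {w | (w : M) ∈ tiAux p R M c e₀}
        add_mem' := fun ha hb => (tiAux p R M c e₀).add_mem ha hb
        zero_mem' := (tiAux p R M c e₀).zero_mem
        smul_mem' := by
          intro q w hw
          obtain ⟨t, rfl⟩ := Ideal.Quotient.mk_surjective q
          show ((Ideal.Quotient.mk (nilradical R) t • w :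
            Submodule.torsionBySet R M ↑(nilradical R)) : M) ∈ tiAux p R M c e₀
          rw [Submodule.torsionBySet.mk_smul]
          exact (tiAux p R M c e₀).smul_mem t hw }
    have hT : tiAux p (R ⧸ nilradical R) (Submodule.torsionBySet R M ↑(nilradical R))
        (Ideal.Quotient.mk (nilradical R) c) e₀ ≤ T := by
      refine Submodule.span_le.mpr ?_
      rintro y ⟨e, he, h, hh, rfl⟩
      let g : R →+ M :=
        { toFun := fun r => (h (Ideal.Quotient.mk (nilradical R) r) : M)
          map_zero' := by simp
          map_add' := fun a b => by rw [map_add, map_add, Submodule.coe_add] }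
      have hg : IsFrobSemilinear p e R g := by
        intro r y'
        show ((h (Ideal.Quotient.mk (nilradical R) ((r ^ p ^ e) • y')) :
          Submodule.torsionBySet R M ↑(nilradical R)) : M)
          = r • ((h (Ideal.Quotient.mk (nilradical R) y') :
            Submodule.torsionBySet R M ↑(nilradical R)) : M)
        have hmk : Ideal.Quotient.mk (nilradical R) ((r ^ p ^ e) • y')
            = ((Ideal.Quotient.mk (nilradical R) r) ^ p ^ e) •
              Ideal.Quotient.mk (nilradical R) y' := by
          rw [smul_eq_mul, map_mul, map_pow]; rfl
        rw [hmk, hh]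
        rw [Submodule.torsionBySet.mk_smul]
        rfl
      exact Submodule.subset_span ⟨e, he, g, hg, rfl⟩
    exact hT hz'
end

section
/- Let R be a commutative Noetherian ring of prime characteristic p such that R_red is F-finite, let M be an R-module, and let 𝔭_1, …, 𝔭_n be the minimal primes of R. Then M_{*R} = Σ_{i=1}^n (0 :_M 𝔭_i)_{*(R/𝔭_i)}, where each (0 :_M 𝔭_i) = {x ∈ M : 𝔭_i·x = 0} is regarded as an (R/𝔭_i)-module, its tight interior over R/𝔭_i is viewed as a submodule of M, and the sum is taken inside M. -/
open scoped TensorProduct Pointwise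

universe u v w

namespace TIProof

section SL

variable {p : ℕ} {D : Type u} [CommRing D]

theorem sl_ring_iff {e : ℕ} {g : D →+ D} :
    IsFrobSemilinear p e D g ↔ ∀ r x, g (r ^ p ^ e * x) = r * g x := by
  simp only [IsFrobSemilinear, smul_eq_mul]

theorem sl_zero_map (e : ℕ) : IsFrobSemilinear p e D (0 : D →+ D) := by
  intro r x; simp

theorem sl_add {e : ℕ} {g g' : D →+ D} (h : IsFrobSemilinear p e D g)
    (h' : IsFrobSemilinear p e D g') : IsFrobSemilinear p e D (g + g') := by
  intro r x
  simp only [AddMonoidHom.add_apply, h r x, h' r x, smul_add]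

theorem sl_mulLeft {e : ℕ} {g : D →+ D} (h : IsFrobSemilinear p e D g) (a : D) :
    IsFrobSemilinear p e D ((AddMonoidHom.mulLeft a).comp g) := by
  have h' := sl_ring_iff.mp h
  rw [sl_ring_iff]
  intro r x
  simp only [AddMonoidHom.coe_comp, Function.comp_apply, AddMonoidHom.coe_mulLeft, h' r x]
  ring

theorem sl_id : IsFrobSemilinear p 0 D (AddMonoidHom.id D) := by
  intro r x; simp

/-- composing `g₁` (inner, level `e₁`) with `g₂` (outer, level `e₂`) gives level `e₁+e₂`. -/
theorem sl_comp {e₁ e₂ : ℕ} {g₁ g₂ : D →+ D} (h₁ : IsFrobSemilinear p e₁ D g₁)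
    (h₂ : IsFrobSemilinear p e₂ D g₂) : IsFrobSemilinear p (e₁ + e₂) D (g₂.comp g₁) := by
  have h₁' := sl_ring_iff.mp h₁
  have h₂' := sl_ring_iff.mp h₂
  rw [sl_ring_iff]
  intro r x
  have key : (r ^ p ^ (e₁ + e₂)) = (r ^ p ^ e₂) ^ p ^ e₁ := by
    rw [← pow_mul, ← pow_add, Nat.add_comm e₂ e₁]
  simp only [AddMonoidHom.coe_comp, Function.comp_apply, key, h₁' (r ^ p ^ e₂) x, h₂' r (g₁ x)]

/-- outer map into a module. -/
theorem sl_comp_mod {N : Type w} [AddCommGroup N] [Module D N] {e₁ ε : ℕ} {g : D →+ D}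
    {h : D →+ N} (h₁ : IsFrobSemilinear p e₁ D g) (h₂ : IsFrobSemilinear p ε D h) :
    IsFrobSemilinear p (e₁ + ε) D (h.comp g) := by
  have h₁' := sl_ring_iff.mp h₁
  intro r x
  have key : (r ^ p ^ (e₁ + ε)) = (r ^ p ^ ε) ^ p ^ e₁ := by
    rw [← pow_mul, ← pow_add, Nat.add_comm ε e₁]
  simp only [AddMonoidHom.coe_comp, Function.comp_apply, smul_eq_mul, key, h₁' (r ^ p ^ ε) x]
  exact h₂ r (g x)

variable (p D)

/-- `I_e(c)`: the ideal of values `g c` over all `e`-semilinear `g : D →+ D`. -/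
def evalIdeal (e : ℕ) (c : D) : Ideal D where
  carrier := {v | ∃ g : D →+ D, IsFrobSemilinear p e D g ∧ g c = v}
  zero_mem' := ⟨0, sl_zero_map e, rfl⟩
  add_mem' := by
    rintro a b ⟨g, hg, rfl⟩ ⟨g', hg', rfl⟩
    exact ⟨g + g', sl_add hg hg', rfl⟩
  smul_mem' := by
    rintro a b ⟨g, hg, rfl⟩
    exact ⟨(AddMonoidHom.mulLeft a).comp g, sl_mulLeft hg a, rfl⟩

variable {p D}

theorem mem_evalIdeal_iff {e : ℕ} {c v : D} :
    v ∈ evalIdeal p D e c ↔ ∃ g : D →+ D, IsFrobSemilinear p e D g ∧ g c = v := Iff.rfl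

theorem self_mem_evalIdeal_zero (c : D) : c ∈ evalIdeal p D 0 c :=
  ⟨AddMonoidHom.id D, sl_id, rfl⟩

theorem evalIdeal_comp {e₁ e₂ : ℕ} {c v w : D} (hv : v ∈ evalIdeal p D e₁ c)
    (hw : w ∈ evalIdeal p D e₂ v) : w ∈ evalIdeal p D (e₁ + e₂) c := by
  obtain ⟨g₁, hg₁, rfl⟩ := hv
  obtain ⟨g₂, hg₂, rfl⟩ := hw
  exact ⟨g₂.comp g₁, sl_comp hg₁ hg₂, rfl⟩

end SL

end TIProof

namespace TIProof

section Star

variable (p : ℕ) [Fact p.Prime] (D : Type u) [CommRing D] [IsDomain D] [CharP D p]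

/-- The master identity: clearing denominators in a `K^{1/p}`-basis representation. -/
theorem star (hff : FFinite p D) :
    ∃ τ : D, τ ≠ 0 ∧ ∃ (m : ℕ) (f : Fin m → D →+ D) (v : Fin m → D),
      (∀ i, IsFrobSemilinear p 1 D (f i)) ∧
      ∀ x : D, τ ^ p * x = ∑ i, f i x ^ p * v i := by
  classical
  have hp : p.Prime := Fact.out
  let K := FractionRing D
  let ι : D →+* K := algebraMap D K
  have hι : Function.Injective ι := IsFractionRing.injective D K
  haveI : CharP K p := charP_of_injective_algebraMap hι p
  haveI : ExpChar K p := ExpChar.prime hp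
  let V := FrobAlg p 1 K
  let toF : K →+ V := ⟨⟨fun x => x, rfl⟩, fun _ _ => rfl⟩
  let ofF : V →+ K := ⟨⟨fun x => x, rfl⟩, fun _ _ => rfl⟩
  have hofinj : Function.Injective ofF := fun a b h => h
  have hsmul : ∀ (r : K) (w : V), ofF (r • w) = r ^ p * ofF w := by
    intro r w
    show iterateFrobenius K p 1 r * ofF w = r ^ p * ofF w
    rw [iterateFrobenius_def, pow_one]
  obtain ⟨s, hs⟩ := hff
  set S : Set V := (fun y : D => toF (ι y)) '' ↑s with hS
  have hspanS : Submodule.span K S = ⊤ := by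
    rw [Submodule.eq_top_iff']
    intro ξv
    obtain ⟨a, b, hb, hab⟩ := IsFractionRing.div_surjective (A := D) (ofF ξv)
    have hb0 : b ≠ 0 := nonZeroDivisors.ne_zero hb
    have hbK : ι b ≠ 0 := fun h => hb0 (hι (by simpa using h))
    obtain ⟨c, hc⟩ := hs (a * b ^ (p - 1))
    have key : ι (a * b ^ (p - 1)) = ∑ y ∈ s, ι (c y) ^ p * ι y := by
      rw [hc, map_sum]
      exact Finset.sum_congr rfl fun y _ => by rw [map_mul, map_pow]
    have hξ : ofF ξv = ∑ y ∈ s, (ι (c y) / ι b) ^ p * ι y := by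
      have e1 : ∑ y ∈ s, (ι (c y) / ι b) ^ p * ι y
          = (∑ y ∈ s, ι (c y) ^ p * ι y) / (ι b) ^ p := by
        rw [Finset.sum_div]
        refine Finset.sum_congr rfl fun y _ => ?_
        rw [div_pow, div_mul_eq_mul_div]
      rw [e1, ← key, ← hab]
      rw [div_eq_div_iff hbK (pow_ne_zero p hbK), ← map_pow, ← map_mul, ← map_mul]
      congr 1
      rw [mul_assoc, ← pow_succ, Nat.sub_add_cancel hp.one_le]
    have hrw : ξv = ∑ y ∈ s, (ι (c y) / ι b) • (toF (ι y)) := by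
      apply hofinj
      rw [map_sum]
      have : ∀ y ∈ s, ofF ((ι (c y) / ι b) • toF (ι y)) = (ι (c y) / ι b) ^ p * ι y := by
        intro y _
        rw [hsmul]
        rfl
      rw [Finset.sum_congr rfl this]
      exact hξ
    rw [hrw]
    exact Submodule.sum_mem _ fun y hy =>
      Submodule.smul_mem _ _ (Submodule.subset_span ⟨y, hy, rfl⟩)
  obtain ⟨bs, hbsub, hbspan, hli⟩ := exists_linearIndependent K S
  have hbfin : bs.Finite := ((s.finite_toSet).image _).subset hbsub
  haveI : Fintype ↥bs := hbfin.fintype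
  let B : Module.Basis ↥bs K V := Module.Basis.mk hli (by rw [Subtype.range_coe, hbspan, hspanS])
  have hB : ∀ i : ↥bs, B i = (i : V) := fun i => Module.Basis.mk_apply _ _ _
  have hrep : ∀ x : D, ∀ i : ↥bs, ∃ cc : D → D,
      B.repr (toF (ι x)) i = ∑ y ∈ s, ι (cc y) * B.repr (toF (ι y)) i := by
    intro x i
    obtain ⟨c, hc⟩ := hs x
    refine ⟨c, ?_⟩
    have hxrep : toF (ι x) = ∑ y ∈ s, ι (c y) • toF (ι y) := by
      apply hofinj
      rw [map_sum]
      have h1 : ∀ y ∈ s, ofF (ι (c y) • toF (ι y)) = ι (c y) ^ p * ι y := by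
        intro y _
        rw [hsmul]; rfl
      rw [Finset.sum_congr rfl h1]
      show ι x = _
      rw [hc, map_sum]
      exact Finset.sum_congr rfl fun y _ => by rw [map_mul, map_pow]
    rw [hxrep, map_sum, Finsupp.finset_sum_apply]
    exact Finset.sum_congr rfl fun y _ => by rw [map_smul, Finsupp.smul_apply, smul_eq_mul]
  obtain ⟨d, hd⟩ := IsLocalization.exist_integer_multiples (nonZeroDivisors D)
    (Finset.univ : Finset (↑s × ↥bs)) (fun yi => B.repr (toF (ι yi.1)) yi.2)
  have hd0 : (d : D) ≠ 0 := nonZeroDivisors.ne_zero d.2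
  have hden : ∀ (y : ↑s) (i : ↥bs), ∃ a : D, ι a = ι d * B.repr (toF (ι (y : D))) i := by
    intro y i
    obtain ⟨a, ha⟩ := hd (y, i) (Finset.mem_univ _)
    exact ⟨a, by simpa [Algebra.smul_def] using ha⟩
  have hint : ∀ (x : D) (i : ↥bs), ∃ a : D, ι a = ι d * B.repr (toF (ι x)) i := by
    intro x i
    obtain ⟨cc, hcc⟩ := hrep x i
    choose aa haa using fun y : ↑s => hden y i
    refine ⟨∑ y ∈ s.attach, cc y * aa y, ?_⟩
    rw [map_sum, hcc, Finset.mul_sum,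
      ← Finset.sum_attach s (fun y => ι (d : D) * (ι (cc y) * B.repr (toF (ι y)) i))]
    refine Finset.sum_congr rfl fun y _ => ?_
    rw [map_mul, haa y]
    ring
  let ffun : ↥bs → D → D := fun i x => (hint x i).choose
  have hf : ∀ (i : ↥bs) (x : D), ι (ffun i x) = ι d * B.repr (toF (ι x)) i :=
    fun i x => (hint x i).choose_spec
  have hfadd : ∀ (i : ↥bs) (x y : D), ffun i (x + y) = ffun i x + ffun i y := by
    intro i x y
    apply hι
    rw [hf i (x + y), map_add ι (ffun i x) (ffun i y), hf i x, hf i y]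
    have harg : toF (ι (x + y)) = toF (ι x) + toF (ι y) := by rw [map_add ι, map_add toF]
    simp only [harg, map_add, Finsupp.add_apply]
    ring
  have hfzero : ∀ i : ↥bs, ffun i 0 = 0 := by
    intro i
    apply hι
    rw [hf, map_zero, map_zero, map_zero]
    simp
  let f : ↥bs → D →+ D := fun i => ⟨⟨ffun i, hfzero i⟩, hfadd i⟩
  have hfsl : ∀ i, IsFrobSemilinear p 1 D (f i) := by
    intro i
    rw [sl_ring_iff]
    intro r x
    show ffun i (r ^ p ^ 1 * x) = r * ffun i x
    apply hι
    have harg : toF (ι (r ^ p ^ 1 * x)) = ι r • toF (ι x) := by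
      apply hofinj
      rw [hsmul]
      show ι (r ^ p ^ 1 * x) = ι r ^ p * ι x
      rw [map_mul, map_pow, pow_one]
    rw [hf i (r ^ p ^ 1 * x), map_mul ι r (ffun i x), hf i x, harg, map_smul,
      Finsupp.smul_apply, smul_eq_mul]
    ring
  have hv : ∀ i : ↥bs, ∃ y : D, ι y = ofF (i : V) := by
    intro i
    obtain ⟨y, _, hy⟩ := hbsub i.2
    exact ⟨y, congrArg ofF hy⟩
  choose vv hvv using hv
  have h3 : ∀ x : D, ι x = ∑ i : ↥bs, B.repr (toF (ι x)) i ^ p * ofF (i : V) := by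
    intro x
    set w := toF (ι x) with hw
    calc ι x = ofF w := rfl
    _ = ofF (∑ i : ↥bs, B.repr w i • B i) := by rw [Module.Basis.sum_repr]
    _ = ∑ i : ↥bs, B.repr w i ^ p * ofF (i : V) := by
        rw [map_sum]
        refine Finset.sum_congr rfl fun i _ => ?_
        rw [hB i, hsmul]
  have main : ∀ x : D, (d : D) ^ p * x = ∑ i : ↥bs, ffun i x ^ p * vv i := by
    intro x
    apply hι
    rw [map_mul, map_pow, map_sum]
    have h2 : ∀ i : ↥bs, ι (ffun i x ^ p * vv i)
        = (ι d * B.repr (toF (ι x)) i) ^ p * ofF (i : V) := by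
      intro i
      rw [map_mul, map_pow, hf, hvv]
    calc ι (d : D) ^ p * ι x
        = ι (d : D) ^ p * ∑ i : ↥bs, B.repr (toF (ι x)) i ^ p * ofF (i : V) :=
          congrArg (fun z => ι (d : D) ^ p * z) (h3 x)
    _ = ∑ i : ↥bs, (ι d * B.repr (toF (ι x)) i) ^ p * ofF (i : V) := by
          rw [Finset.mul_sum]
          exact Finset.sum_congr rfl fun i _ => by ring
    _ = ∑ i : ↥bs, ι (ffun i x ^ p * vv i) :=
          Finset.sum_congr rfl fun i _ => (h2 i).symm
  let n := Fintype.card ↥bs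
  let e := (Fintype.equivFin ↥bs).symm
  refine ⟨d, hd0, n, fun j => f (e j), fun j => vv (e j), fun j => hfsl (e j), fun x => ?_⟩
  rw [main x]
  exact (Equiv.sum_comp e (fun i => ffun i x ^ p * vv i)).symm

end Star

end TIProof

namespace TIProof

section Nice

variable {p : ℕ} [Fact p.Prime] {D : Type u} [CommRing D] [IsDomain D] [CharP D p]

/-- universal multiplier: `τ^p · x ∈ I_1(x)` for every `x`. -/
theorem star_mem (hff : FFinite p D) :
    ∃ τ : D, τ ≠ 0 ∧ ∃ (m : ℕ) (f : Fin m → D →+ D) (v : Fin m → D),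
      (∀ i, IsFrobSemilinear p 1 D (f i)) ∧
      (∀ x : D, τ ^ p * x = ∑ i, f i x ^ p * v i) ∧
      (∀ x : D, τ ^ p * x ∈ evalIdeal p D 1 x) := by
  have hp : p.Prime := Fact.out
  obtain ⟨τ, hτ, m, f, v, hfsl, hid⟩ := star p D hff
  refine ⟨τ, hτ, m, f, v, hfsl, hid, fun x => ?_⟩
  rw [hid x]
  refine Ideal.sum_mem _ fun i _ => ?_
  have h1 : f i x ∈ evalIdeal p D 1 x := ⟨f i, hfsl i, rfl⟩
  have h2 : f i x ^ p * v i = (f i x ^ (p - 1) * v i) * f i x := by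
    rw [mul_comm _ (f i x), ← mul_assoc, ← pow_succ', Nat.sub_add_cancel hp.one_le]
  rw [h2]
  exact Ideal.mul_mem_left _ _ h1

/-- the contraction function for exponents of `τ`. -/
private def mu (p : ℕ) : ℕ → ℕ := fun k => k / p + p + k % p

theorem mu_iter_le (hp : p.Prime) : ∀ (n k : ℕ), k ≤ n + 3 * p → (mu p)^[n] k ≤ 3 * p := by
  intro n
  induction n with
  | zero => intro k hk; simpa using hk
  | succ n ih =>
    intro k hk
    rw [Function.iterate_succ_apply]
    apply ih
    have hp2 : 2 ≤ p := hp.two_le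
    by_cases hk3 : k ≤ 3 * p
    · have h1 : k / p ≤ 3 := by
        have := Nat.div_le_div_right (c := p) hk3
        rwa [Nat.mul_div_cancel _ hp.pos] at this
      have h2 : k % p < p := Nat.mod_lt _ hp.pos
      have : mu p k ≤ 3 + p + (p - 1) := by
        unfold mu; omega
      omega
    · push_neg at hk3
      have hkey : mu p k < k := by
        have hqr : p * (k / p) + k % p = k := Nat.div_add_mod k p
        have h2 : k % p < p := Nat.mod_lt _ hp.pos
        have hq : 3 ≤ k / p := (Nat.le_div_iff_mul_le hp.pos).mpr (by omega)
        unfold mu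
        nlinarith [hqr, h2, hq, hp2]
      omega

theorem L4 {τ : D} (hp : p.Prime)
    (hstar : ∀ x : D, τ ^ p * x ∈ evalIdeal p D 1 x) :
    ∀ (k E : ℕ), ∃ e, E ≤ e ∧ τ ^ (3 * p) ∈ evalIdeal p D e (τ ^ k) := by
  have step : ∀ k : ℕ, τ ^ mu p k ∈ evalIdeal p D 1 (τ ^ k) := by
    intro k
    obtain ⟨g, hg, hgv⟩ := hstar (τ ^ (k % p))
    refine ⟨g, hg, ?_⟩
    have harg : τ ^ k = (τ ^ (k / p)) ^ p ^ 1 * τ ^ (k % p) := by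
      rw [← pow_mul, ← pow_add, pow_one]
      congr 1
      rw [mul_comm]
      exact (Nat.div_add_mod k p).symm
    rw [harg, sl_ring_iff.mp hg, hgv, ← pow_add, ← pow_add]
    congr 1
    unfold mu
    ring
  have iter : ∀ (E k : ℕ), τ ^ ((mu p)^[E] k) ∈ evalIdeal p D E (τ ^ k) := by
    intro E
    induction E with
    | zero => intro k; simpa using self_mem_evalIdeal_zero (τ ^ k)
    | succ E ih =>
      intro k
      rw [Function.iterate_succ_apply']
      exact evalIdeal_comp (ih k) (step _)
  intro k E
  refine ⟨max E k, le_max_left _ _, ?_⟩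
  have hle : (mu p)^[max E k] k ≤ 3 * p := mu_iter_le hp _ _ (by omega)
  have : τ ^ (3 * p) = τ ^ (3 * p - (mu p)^[max E k] k) * τ ^ ((mu p)^[max E k] k) := by
    rw [← pow_add]
    congr 1
    omega
  rw [this]
  exact Ideal.mul_mem_left _ _ (iter (max E k) k)

theorem L5 [IsNoetherianRing D] {τ : D} (hτ : τ ≠ 0) {m : ℕ} {f : Fin m → D →+ D} {v : Fin m → D}
    (hp : p.Prime) (hfsl : ∀ i, IsFrobSemilinear p 1 D (f i))
    (hid : ∀ x : D, τ ^ p * x = ∑ i, f i x ^ p * v i)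
    (hstar : ∀ x : D, τ ^ p * x ∈ evalIdeal p D 1 x)
    {c' : D} (hc' : c' ≠ 0) :
    ∃ e k, τ ^ k ∈ evalIdeal p D e c' := by
  classical
  have hp2 : 2 ≤ p := hp.two_le
  -- the saturated chain
  let Sat : ℕ → Ideal D := fun e =>
    { carrier := {u | ∃ k, τ ^ k * u ∈ evalIdeal p D e c'}
      zero_mem' := ⟨0, by simpa using Ideal.zero_mem _⟩
      add_mem' := by
        rintro a b ⟨k₁, h₁⟩ ⟨k₂, h₂⟩
        refine ⟨k₁ + k₂, ?_⟩
        have : τ ^ (k₁ + k₂) * (a + b) = τ ^ k₂ * (τ ^ k₁ * a) + τ ^ k₁ * (τ ^ k₂ * b) := by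
          ring
        rw [this]
        exact Ideal.add_mem _ (Ideal.mul_mem_left _ _ h₁) (Ideal.mul_mem_left _ _ h₂)
      smul_mem' := by
        rintro r a ⟨k, h⟩
        refine ⟨k, ?_⟩
        have : τ ^ k * (r • a) = r * (τ ^ k * a) := by rw [smul_eq_mul]; ring
        rw [this]
        exact Ideal.mul_mem_left _ _ h }
  have hSatmem : ∀ (e : ℕ) (u : D), u ∈ Sat e ↔ ∃ k, τ ^ k * u ∈ evalIdeal p D e c' :=
    fun e u => Iff.rfl
  have hmulmem : ∀ (e : ℕ) (w : D), w ∈ evalIdeal p D e c' → τ ^ p * w ∈ evalIdeal p D (e + 1) c' :=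
    fun e w hw => evalIdeal_comp hw (hstar w)
  have hmono : ∀ e, Sat e ≤ Sat (e + 1) := by
    intro e u hu
    obtain ⟨k, hk⟩ := hu
    refine ⟨k + p, ?_⟩
    have : τ ^ (k + p) * u = τ ^ p * (τ ^ k * u) := by ring
    rw [this]
    exact hmulmem e _ hk
  let C : ℕ →o Ideal D := ⟨Sat, monotone_nat_of_le_succ hmono⟩
  obtain ⟨n, hn⟩ := monotone_stabilizes_iff_noetherian.mpr ‹IsNoetherianRing D› C
  set 𝔠 : Ideal D := Sat n with h𝔠
  have hc'𝔠 : c' ∈ 𝔠 := by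
    have h0 : c' ∈ Sat 0 := ⟨0, by simpa using self_mem_evalIdeal_zero c'⟩
    have : Sat 0 ≤ Sat n := C.monotone (Nat.zero_le n)
    exact this h0
  have hc'L : (𝔠 : Ideal D) ≠ ⊥ := by
    intro h
    rw [h] at hc'𝔠
    exact hc' (by simpa using hc'𝔠)
  -- F-compatibility
  have hFcomp : ∀ u ∈ 𝔠, ∃ k, τ ^ k * u ∈ 𝔠 ^ 2 := by
    intro u hu
    obtain ⟨k, hk⟩ := hu
    obtain ⟨ψ, hψ, hψv⟩ := hk
    refine ⟨k + p, ?_⟩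
    have h1 : τ ^ (k + p) * u = τ ^ p * (τ ^ k * u) := by ring
    rw [h1, ← hψv, hid (ψ c')]
    refine Ideal.sum_mem _ fun i _ => ?_
    have hwi : f i (ψ c') ∈ 𝔠 := by
      have : f i (ψ c') ∈ evalIdeal p D (n + 1) c' :=
        ⟨(f i).comp ψ, sl_comp hψ (hfsl i), rfl⟩
      have h2 : f i (ψ c') ∈ Sat (n + 1) := ⟨0, by simpa using this⟩
      have hnn : Sat n = Sat (n + 1) := hn (n + 1) (Nat.le_succ n)
      rw [h𝔠, hnn]
      exact h2
    have h3 : f i (ψ c') ^ p * v i = (f i (ψ c') ^ (p - 2) * v i) * f i (ψ c') ^ 2 := by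
      rw [mul_comm _ (f i (ψ c') ^ 2), ← mul_assoc, ← pow_add]
      congr 2
      omega
    rw [h3]
    exact Ideal.mul_mem_left _ _ (Ideal.pow_mem_pow hwi 2)
  -- uniform exponent on generators
  have hunif : ∃ K, ∀ u ∈ 𝔠, τ ^ K * u ∈ 𝔠 ^ 2 := by
    obtain ⟨G, hG⟩ := IsNoetherian.noetherian 𝔠
    choose kk hkk using fun g : ↑G => hFcomp g (hG ▸ Submodule.subset_span g.2)
    refine ⟨G.attach.sup kk, fun u hu => ?_⟩
    have hu' : u ∈ Submodule.span D (G : Set D) := by rw [hG]; exact hu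
    clear hu
    induction hu' using Submodule.span_induction with
    | mem g hg =>
      have h1 : τ ^ (G.attach.sup kk) * g
          = τ ^ (G.attach.sup kk - kk ⟨g, hg⟩) * (τ ^ (kk ⟨g, hg⟩) * g) := by
        rw [← mul_assoc, ← pow_add]
        congr 2
        have := Finset.le_sup (f := kk) (Finset.mem_attach G ⟨g, hg⟩)
        omega
      rw [h1]
      exact Ideal.mul_mem_left _ _ (hkk ⟨g, hg⟩)
    | zero => simpa using Ideal.zero_mem _
    | add a b _ _ ha hb =>
      rw [mul_add]
      exact Ideal.add_mem _ ha hb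
    | smul r a _ ha
      =>
      rw [smul_eq_mul, mul_left_comm]
      exact Ideal.mul_mem_left _ _ ha
  obtain ⟨K, hK⟩ := hunif
  -- pass to the localization at τ
  let L := Localization.Away τ
  have hpow : Submonoid.powers τ ≤ nonZeroDivisors D :=
    powers_le_nonZeroDivisors_of_noZeroDivisors hτ
  haveI : IsDomain L := IsLocalization.isDomain_of_le_nonZeroDivisors L hpow
  let aM : D →+* L := algebraMap D L
  have hτunit : IsUnit (aM τ) := IsLocalization.map_units L ⟨τ, Submonoid.mem_powers τ⟩
  set 𝔠L : Ideal L := 𝔠.map aM with h𝔠L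
  have hsub : 𝔠L ≤ 𝔠L • 𝔠L := by
    rw [smul_eq_mul, ← pow_two]
    rw [h𝔠L, Ideal.map_le_iff_le_comap]
    intro u hu
    have h1 : aM (τ ^ K * u) ∈ (𝔠 ^ 2).map aM := Ideal.mem_map_of_mem _ (hK u hu)
    have h2 : (𝔠 ^ 2).map aM = 𝔠L ^ 2 := by rw [Ideal.map_pow]
    obtain ⟨w, hw⟩ := hτunit.exists_left_inv
    have h3 : aM u = w ^ K * aM (τ ^ K * u) := by
      rw [map_mul, map_pow, ← mul_assoc, ← mul_pow, hw, one_pow, one_mul]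
    show aM u ∈ 𝔠L ^ 2
    rw [h3, ← h2]
    exact Ideal.mul_mem_left _ _ h1
  have hfgL : 𝔠L.FG := Ideal.FG.map (IsNoetherian.noetherian 𝔠) aM
  obtain ⟨r, hr1, hr0⟩ :=
    Submodule.exists_sub_one_mem_and_smul_eq_zero_of_fg_of_le_smul 𝔠L 𝔠L hfgL hsub
  have hc'L0 : aM c' ≠ 0 := by
    intro h
    rw [IsLocalization.map_eq_zero_iff (Submonoid.powers τ) L] at h
    obtain ⟨⟨m', hm'⟩, hm⟩ := h
    obtain ⟨j, rfl⟩ := hm'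
    exact hc' ((mul_eq_zero.mp (show τ ^ j * c' = 0 from hm)).resolve_left (pow_ne_zero j hτ))
  have hr0' : r = 0 := by
    have := hr0 (aM c') (Ideal.mem_map_of_mem _ hc'𝔠)
    rw [smul_eq_mul] at this
    exact (mul_eq_zero.mp this).resolve_right hc'L0
  have hone : (1 : L) ∈ 𝔠L := by
    have : (-1 : L) ∈ 𝔠L := by
      rw [hr0', zero_sub] at hr1
      exact hr1
    rw [← neg_neg (1 : L)]
    exact 𝔠L.neg_mem this
  -- extract a power of τ in 𝔠
  rw [h𝔠L, IsLocalization.mem_map_algebraMap_iff (Submonoid.powers τ) L] at hone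
  obtain ⟨⟨⟨a, ha⟩, t⟩, hat⟩ := hone
  simp only [one_mul] at hat
  have hat' : aM t.1 = aM a := hat
  obtain ⟨j, hj⟩ := t.2
  rw [← hj] at hat'
  rw [IsLocalization.eq_iff_exists (Submonoid.powers τ) L] at hat'
  obtain ⟨cc, hcc⟩ := hat'
  obtain ⟨j', hj'⟩ := cc.2
  rw [← hj'] at hcc
  have hmem : τ ^ (j' + j) ∈ 𝔠 := by
    rw [pow_add, hcc]
    exact Ideal.mul_mem_left _ _ ha
  obtain ⟨k, hk⟩ := hmem
  rw [← pow_add] at hk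
  exact ⟨n, k + (j' + j), hk⟩

/-- Every F-finite Noetherian domain of characteristic `p` has a "nice" (co-test) element. -/
theorem nice [IsNoetherianRing D] (hff : FFinite p D) :
    ∃ t : D, t ≠ 0 ∧ ∀ c' : D, c' ≠ 0 → ∀ E : ℕ, ∃ e, E ≤ e ∧ t ∈ evalIdeal p D e c' := by
  have hp : p.Prime := Fact.out
  obtain ⟨τ, hτ, m, f, v, hfsl, hid, hstar⟩ := star_mem hff
  refine ⟨τ ^ (3 * p), pow_ne_zero _ hτ, fun c' hc' E => ?_⟩
  obtain ⟨e₁, k, hk⟩ := L5 hτ hp hfsl hid hstar hc'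
  obtain ⟨e₂, hE, h2⟩ := L4 hp hstar k E
  exact ⟨e₁ + e₂, le_trans hE (Nat.le_add_left _ _), evalIdeal_comp hk h2⟩

end Nice

end TIProof

namespace TIProof

section Helpers

variable {p : ℕ}

theorem mem_tightInterior_iff {R : Type u} {M : Type v} [CommRing R] [AddCommGroup M]
    [Module R M] {x : M} :
    x ∈ tightInterior p R M ↔ ∀ c ∈ RCirc R, ∀ e₀ : ℕ, x ∈ tiAux p R M c e₀ := by
  simp [tightInterior, Submodule.mem_iInf]

theorem ffinite_of_surjective [Fact p.Prime] {A : Type u} {B : Type w} [CommRing A] [CommRing B]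
    [CharP B p] (f : A →+* B) (hf : Function.Surjective f) (hA : FFinite p A) : FFinite p B := by
  classical
  haveI : ExpChar B p := ExpChar.prime Fact.out
  obtain ⟨s, hs⟩ := hA
  refine ⟨s.image f, fun x => ?_⟩
  obtain ⟨a, rfl⟩ := hf x
  obtain ⟨c, hc⟩ := hs a
  refine ⟨fun z => f (∑ y ∈ s.filter (fun y => f y = z), c y), ?_⟩
  have h1 : f a = ∑ y ∈ s, f (c y) ^ p * f y := by
    rw [hc, map_sum]
    exact Finset.sum_congr rfl fun y _ => by rw [map_mul, map_pow]
  rw [h1, ← Finset.sum_fiberwise_of_maps_to (fun y hy => Finset.mem_image_of_mem f hy)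
    (fun y => f (c y) ^ p * f y)]
  refine Finset.sum_congr rfl fun z _ => ?_
  calc ∑ i ∈ s.filter (fun y => f y = z), f (c i) ^ p * f i
      = ∑ i ∈ s.filter (fun y => f y = z), f (c i) ^ p * z :=
        Finset.sum_congr rfl fun i hi => by rw [(Finset.mem_filter.mp hi).2]
  _ = (∑ i ∈ s.filter (fun y => f y = z), f (c i) ^ p) * z := (Finset.sum_mul _ _ _).symm
  _ = (∑ i ∈ s.filter (fun y => f y = z), f (c i)) ^ p * z := by rw [sum_pow_char]
  _ = f (∑ i ∈ s.filter (fun y => f y = z), c i) ^ p * z := by rw [map_sum]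

theorem nilradical_exponent (R : Type u) [CommRing R] [IsNoetherianRing R] (hp : p.Prime) :
    ∃ e' : ℕ, ∀ a ∈ nilradical R, a ^ p ^ e' = 0 := by
  obtain ⟨k, hk⟩ := IsNoetherianRing.isNilpotent_nilradical R
  refine ⟨k, fun a ha => ?_⟩
  have h1 : k ≤ p ^ k := Nat.le_of_lt (Nat.lt_pow_self (n := k) hp.one_lt)
  have h2 : a ^ k = 0 := by
    have := Ideal.pow_mem_pow ha k
    rw [hk] at this
    simpa using this
  calc a ^ p ^ k = a ^ k * a ^ (p ^ k - k) := by rw [← pow_add]; congr 1; omega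
  _ = 0 := by rw [h2, zero_mul]

theorem mem_nilradical_of_forall_minimal {R : Type u} [CommRing R] {x : R}
    (h : ∀ 𝔮 ∈ minimalPrimes R, x ∈ 𝔮) : x ∈ nilradical R := by
  rw [nilradical_eq_sInf, Submodule.mem_sInf]
  intro P hP
  rw [Set.mem_setOf_eq] at hP
  haveI : Ideal.IsPrime P := hP
  obtain ⟨𝔮, h𝔮, hle⟩ := Ideal.exists_minimalPrimes_le (bot_le : ⊥ ≤ P)
  exact hle (h 𝔮 h𝔮)

theorem exists_avoiding {R : Type u} [CommRing R] [IsNoetherianRing R] {𝔭 : Ideal R}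
    (h𝔭 : 𝔭 ∈ minimalPrimes R) :
    ∃ d : R, d ∉ 𝔭 ∧ ∀ 𝔮 ∈ minimalPrimes R, 𝔮 ≠ 𝔭 → d ∈ 𝔮 := by
  classical
  haveI hP : 𝔭.IsPrime := h𝔭.1.1
  have hfin := minimalPrimes.finite_of_isNoetherianRing R
  set T : Finset (Ideal R) := hfin.toFinset.erase 𝔭 with hT
  have hnle : ¬ T.inf id ≤ 𝔭 := by
    intro hle
    obtain ⟨𝔮, h𝔮T, h𝔮le⟩ := (hP.inf_le').mp hle
    have h𝔮ne : 𝔮 ≠ 𝔭 := (Finset.mem_erase.mp h𝔮T).1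
    have h𝔮mp : 𝔮 ∈ minimalPrimes R := hfin.mem_toFinset.mp (Finset.mem_erase.mp h𝔮T).2
    exact h𝔮ne (le_antisymm h𝔮le (h𝔭.2 ⟨h𝔮mp.1.1, bot_le⟩ h𝔮le))
  obtain ⟨d, hd1, hd2⟩ := SetLike.not_le_iff_exists.mp hnle
  refine ⟨d, hd2, fun 𝔮 h𝔮 hne => ?_⟩
  have h𝔮T : 𝔮 ∈ T := Finset.mem_erase.mpr ⟨hne, hfin.mem_toFinset.mpr h𝔮⟩
  exact (Submodule.mem_finsetInf.mp hd1) 𝔮 h𝔮T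

theorem bot_mem_minimalPrimes {D : Type u} [CommRing D] [IsDomain D] :
    (⊥ : Ideal D) ∈ minimalPrimes D :=
  ⟨⟨Ideal.bot_prime, le_rfl⟩, fun _ _ _ => bot_le⟩

theorem minimal_eq_bot {D : Type u} [CommRing D] [IsDomain D] {P : Ideal D}
    (h : P ∈ minimalPrimes D) : P = ⊥ :=
  le_bot_iff.mp (h.2 ⟨Ideal.bot_prime, bot_le⟩ bot_le)

theorem ne_zero_of_mem_RCirc {D : Type u} [CommRing D] [IsDomain D] {c : D}
    (h : c ∈ RCirc D) : c ≠ 0 := by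
  intro h0
  exact h ⊥ bot_mem_minimalPrimes (by simp [h0])

theorem mem_RCirc_of_ne_zero {D : Type u} [CommRing D] [IsDomain D] {c : D}
    (h : c ≠ 0) : c ∈ RCirc D := by
  intro P hP hc
  rw [minimal_eq_bot hP] at hc
  exact h (by simpa using hc)

theorem charP_quotient (R : Type u) [CommRing R] {pp : ℕ} [Fact pp.Prime] [CharP R pp]
    (𝔭 : Ideal R) [h𝔭 : 𝔭.IsPrime] : CharP (R ⧸ 𝔭) pp := by
  haveI : Nontrivial (R ⧸ 𝔭) := Ideal.Quotient.nontrivial_iff.mpr h𝔭.ne_top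
  rw [CharP.charP_iff_prime_eq_zero (Fact.out : pp.Prime)]
  have : ((pp : R) : R ⧸ 𝔭) = 0 := by rw [CharP.cast_eq_zero R pp, map_zero]
  rwa [map_natCast] at this

theorem addQuotLift {R : Type u} {A : Type v} [CommRing R] [AddCommGroup A] (𝔭 : Ideal R)
    (φ : R →+ A) (h : ∀ z ∈ 𝔭, φ z = 0) :
    ∃ Φ : R ⧸ 𝔭 →+ A, ∀ z : R, Φ (Ideal.Quotient.mk 𝔭 z) = φ z := by
  classical
  have key : ∀ a b : R, Ideal.Quotient.mk 𝔭 a = Ideal.Quotient.mk 𝔭 b → φ a = φ b := by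
    intro a b hab
    rw [Ideal.Quotient.mk_eq_mk_iff_sub_mem] at hab
    have := h _ hab
    rw [map_sub, sub_eq_zero] at this
    exact this
  have hsur := Ideal.Quotient.mk_surjective (I := 𝔭)
  choose sec hsec using hsur
  have hF : ∀ z : R, φ (sec (Ideal.Quotient.mk 𝔭 z)) = φ z := fun z => key _ _ (hsec _)
  refine ⟨⟨⟨fun w => φ (sec w), ?_⟩, ?_⟩, hF⟩
  · show φ (sec (0 : R ⧸ 𝔭)) = 0
    rw [show (0 : R ⧸ 𝔭) = Ideal.Quotient.mk 𝔭 0 from (map_zero _).symm, hF, map_zero]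
  · intro w₁ w₂
    obtain ⟨z₁, rfl⟩ : ∃ z, Ideal.Quotient.mk 𝔭 z = w₁ := ⟨sec w₁, hsec w₁⟩
    obtain ⟨z₂, rfl⟩ : ∃ z, Ideal.Quotient.mk 𝔭 z = w₂ := ⟨sec w₂, hsec w₂⟩
    show φ (sec (Ideal.Quotient.mk 𝔭 z₁ + Ideal.Quotient.mk 𝔭 z₂))
      = φ (sec (Ideal.Quotient.mk 𝔭 z₁)) + φ (sec (Ideal.Quotient.mk 𝔭 z₂))
    rw [← map_add, hF, hF, hF, map_add]

end Helpers

end TIProof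

namespace TIProof

section Main

variable (p : ℕ) [Fact p.Prime] (R : Type u) [CommRing R] [IsNoetherianRing R] [CharP R p]
variable (M : Type v) [AddCommGroup M] [Module R M]

theorem supset_lemma {𝔭 : Ideal R} (h𝔭 : 𝔭 ∈ minimalPrimes R) :
    Submodule.span R
        (Subtype.val '' (tightInterior p (R ⧸ 𝔭) (Submodule.torsionBySet R M ↑𝔭) :
          Set (Submodule.torsionBySet R M ↑𝔭))) ≤ tightInterior p R M := by
  haveI hP : 𝔭.IsPrime := h𝔭.1.1
  rw [Submodule.span_le]
  rintro _ ⟨x₀, hx₀, rfl⟩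
  rw [SetLike.mem_coe, mem_tightInterior_iff]
  intro c hc e₀
  have hcP : c ∉ 𝔭 := hc 𝔭 h𝔭
  have hc0 : (Ideal.Quotient.mk 𝔭 c) ≠ 0 := fun h => hcP (Ideal.Quotient.eq_zero_iff_mem.mp h)
  have hcD : Ideal.Quotient.mk 𝔭 c ∈ RCirc (R ⧸ 𝔭) := mem_RCirc_of_ne_zero hc0
  have hx : x₀ ∈ tiAux p (R ⧸ 𝔭) (Submodule.torsionBySet R M ↑𝔭) (Ideal.Quotient.mk 𝔭 c) e₀ :=
    mem_tightInterior_iff.mp hx₀ _ hcD e₀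
  clear hx₀
  induction hx using Submodule.span_induction with
  | mem y hy =>
    obtain ⟨e, he, h, hsl, rfl⟩ := hy
    apply Submodule.subset_span
    refine ⟨e, he, ((Submodule.torsionBySet R M
      ↑𝔭).subtype.toAddMonoidHom).comp (h.comp (Ideal.Quotient.mk 𝔭).toAddMonoidHom), ?_, rfl⟩
    intro r z
    show ((h (Ideal.Quotient.mk 𝔭 (r ^ p ^ e • z))) : M) = r • ((h (Ideal.Quotient.mk 𝔭 z)) : M)
    have h1 : Ideal.Quotient.mk 𝔭 (r ^ p ^ e • z)
        = (Ideal.Quotient.mk 𝔭 r) ^ p ^ e • (Ideal.Quotient.mk 𝔭 z) := by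
      rw [smul_eq_mul, smul_eq_mul, map_mul, map_pow]
    rw [h1, hsl (Ideal.Quotient.mk 𝔭 r) (Ideal.Quotient.mk 𝔭 z),
      Submodule.torsionBySet.mk_smul]
    rfl
  | zero => simpa using Submodule.zero_mem _
  | add a b _ _ iha ihb =>
    rw [Submodule.coe_add]
    exact Submodule.add_mem _ iha ihb
  | smul a x _ ih =>
    obtain ⟨r, rfl⟩ := Ideal.Quotient.mk_surjective a
    rw [Submodule.torsionBySet.mk_smul, SetLike.val_smul]
    exact Submodule.smul_mem _ r ih

theorem subset_lemma (hred : FFinite p (R ⧸ nilradical R)) :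
    tightInterior p R M ≤
      ⨆ 𝔭 ∈ minimalPrimes R, Submodule.span R
        (Subtype.val '' (tightInterior p (R ⧸ 𝔭) (Submodule.torsionBySet R M ↑𝔭) :
          Set (Submodule.torsionBySet R M ↑𝔭))) := by
  classical
  have hp : p.Prime := Fact.out
  haveI : ExpChar R p := ExpChar.prime hp
  obtain ⟨e', he'⟩ := nilradical_exponent R hp
  have hfin := minimalPrimes.finite_of_isNoetherianRing R
  have hdata : ∀ 𝔭 ∈ minimalPrimes R, ∃ d sl : R, d ∉ 𝔭 ∧
      (∀ 𝔮 ∈ minimalPrimes R, 𝔮 ≠ 𝔭 → d ∈ 𝔮) ∧ sl ∉ 𝔭 ∧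
      (∀ c' : R ⧸ 𝔭, c' ≠ 0 → ∀ E : ℕ, ∃ e, E ≤ e ∧
        Ideal.Quotient.mk 𝔭 sl ∈ evalIdeal p (R ⧸ 𝔭) e c') := by
    intro 𝔭 h𝔭
    haveI hP : 𝔭.IsPrime := h𝔭.1.1
    haveI : CharP (R ⧸ 𝔭) p := charP_quotient R 𝔭
    have hJle : nilradical R ≤ 𝔭 := nilradical_le_prime 𝔭
    have hsurj : Function.Surjective (Ideal.Quotient.factor hJle) := by
      intro b
      obtain ⟨a, ha⟩ := Ideal.Quotient.mk_surjective b
      exact ⟨Ideal.Quotient.mk _ a, by rw [Ideal.Quotient.factor_mk]; exact ha⟩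
    have hffq : FFinite p (R ⧸ 𝔭) :=
      ffinite_of_surjective (Ideal.Quotient.factor hJle) hsurj hred
    obtain ⟨t, ht0, htnice⟩ := nice hffq
    obtain ⟨sl, hsl⟩ := Ideal.Quotient.mk_surjective t
    obtain ⟨d, hd1, hd2⟩ := exists_avoiding h𝔭
    refine ⟨d, sl, hd1, hd2, fun h => ht0 ?_, fun c' hc' E => ?_⟩
    · rw [← hsl]
      exact Ideal.Quotient.eq_zero_iff_mem.mpr h
    · obtain ⟨e, hE, hmem⟩ := htnice c' hc' E
      exact ⟨e, hE, by rwa [hsl]⟩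
  choose dd ss hd1 hd2 hs1 hs2 using hdata
  set F := hfin.toFinset with hF
  have hmem𝔭 : ∀ q : {x // x ∈ F}, q.1 ∈ minimalPrimes R := fun q => hfin.mem_toFinset.mp q.2
  set c : R := ∑ q ∈ F.attach, (dd q.1 (hmem𝔭 q) * ss q.1 (hmem𝔭 q)) ^ p ^ e' with hcdef
  have hcRC : c ∈ RCirc R := by
    intro P hPmp hPc
    haveI hPP : P.IsPrime := hPmp.1.1
    have hqPF : P ∈ F := hfin.mem_toFinset.mpr hPmp
    set qP : {x // x ∈ F} := ⟨P, hqPF⟩ with hqP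
    have hrest : ∑ q ∈ F.attach.erase qP,
        (dd q.1 (hmem𝔭 q) * ss q.1 (hmem𝔭 q)) ^ p ^ e' ∈ P := by
      refine Ideal.sum_mem _ fun q hq => ?_
      have hne : q.1 ≠ P := by
        intro h
        exact (Finset.mem_erase.mp hq).1 (Subtype.ext h)
      have hdP : dd q.1 (hmem𝔭 q) ∈ P := hd2 q.1 (hmem𝔭 q) P hPmp (fun h => hne h.symm)
      exact Ideal.pow_mem_of_mem P (Ideal.mul_mem_right _ P hdP) _ (pow_pos hp.pos e')
    have h' := Finset.add_sum_erase F.attach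
      (fun q : {x // x ∈ F} => (dd q.1 (hmem𝔭 q) * ss q.1 (hmem𝔭 q)) ^ p ^ e')
      (Finset.mem_attach F qP)
    have htermP : (dd P hPmp * ss P hPmp) ^ p ^ e' ∈ P := by
      have hsub := Ideal.sub_mem P hPc hrest
      have heq : c - (∑ q ∈ F.attach.erase qP,
          (dd q.1 (hmem𝔭 q) * ss q.1 (hmem𝔭 q)) ^ p ^ e')
          = (dd P hPmp * ss P hPmp) ^ p ^ e' := by
        rw [hcdef, ← h']
        exact add_sub_cancel_right _ _
      rwa [heq] at hsub
    rw [hPP.pow_mem_iff_mem _ (pow_pos hp.pos e')] at htermP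
    rcases hPP.mem_or_mem htermP with h | h
    · exact hd1 P hPmp h
    · exact hs1 P hPmp h
  have key : tiAux p R M c e' ≤
      ⨆ 𝔭 ∈ minimalPrimes R, Submodule.span R
        (Subtype.val '' (tightInterior p (R ⧸ 𝔭) (Submodule.torsionBySet R M ↑𝔭) :
          Set (Submodule.torsionBySet R M ↑𝔭))) := by
    rw [tiAux, Submodule.span_le]
    rintro _ ⟨e, he, g, hg, rfl⟩
    rw [SetLike.mem_coe]
    have hgc : g c = ∑ q ∈ F.attach, g ((dd q.1 (hmem𝔭 q) * ss q.1 (hmem𝔭 q)) ^ p ^ e') := by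
      rw [hcdef, map_sum]
    rw [hgc]
    refine Submodule.sum_mem _ fun q _ => ?_
    have h𝔭 : q.1 ∈ minimalPrimes R := hmem𝔭 q
    haveI hP : q.1.IsPrime := h𝔭.1.1
    haveI : CharP (R ⧸ q.1) p := charP_quotient R q.1
    have hg' : ∀ (r w : R), g (r ^ p ^ e * w) = r • g w := by
      intro r w
      have := hg r w
      rwa [smul_eq_mul] at this
    set ε := e - e' with hεdef
    have hεe : ε + e' = e := by omega
    set d := dd q.1 h𝔭 with hd
    set sl := ss q.1 h𝔭 with hsl
    set N := Submodule.torsionBySet R M (↑q.1 : Set R) with hN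
    let frobH : R →+ R := (iterateFrobenius R p e').toAddMonoidHom.comp (AddMonoidHom.mulLeft d)
    have hfrobH : ∀ z, frobH z = (d * z) ^ p ^ e' := fun z => by
      show iterateFrobenius R p e' (d * z) = (d * z) ^ p ^ e'
      rw [iterateFrobenius_def]
    let φ : R →+ M := g.comp frobH
    have hφ : ∀ z, φ z = g ((d * z) ^ p ^ e') := fun z => by
      show g (frobH z) = _
      rw [hfrobH]
    have hdnil : ∀ z ∈ q.1, d * z ∈ nilradical R := by
      intro z hz
      apply mem_nilradical_of_forall_minimal
      intro 𝔮 h𝔮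
      by_cases hq : 𝔮 = q.1
      · subst hq
        exact Ideal.mul_mem_left _ _ hz
      · exact Ideal.mul_mem_right _ _ (hd2 q.1 h𝔭 𝔮 h𝔮 hq)
    have hφmem : ∀ z, φ z ∈ N := by
      intro z
      rw [hN, Submodule.mem_torsionBySet_iff]
      rintro ⟨a, ha⟩
      show a • φ z = 0
      have harg : (a ^ p ^ ε * (d * z)) ^ p ^ e' = a ^ p ^ e * (d * z) ^ p ^ e' := by
        rw [mul_pow, ← pow_mul, ← pow_add, hεe]
      have hanil : a ^ p ^ ε * (d * z) ∈ nilradical R := by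
        apply mem_nilradical_of_forall_minimal
        intro 𝔮 h𝔮
        by_cases hq : 𝔮 = q.1
        · subst hq
          exact Ideal.mul_mem_right _ _ (Ideal.pow_mem_of_mem _ ha _ (pow_pos hp.pos ε))
        · exact Ideal.mul_mem_left _ _ (Ideal.mul_mem_right _ _ (hd2 q.1 h𝔭 𝔮 h𝔮 hq))
      rw [hφ, ← hg' a ((d * z) ^ p ^ e'), ← harg, he' _ hanil, map_zero]
    have hφkill : ∀ z ∈ q.1, φ z = 0 := by
      intro z hz
      rw [hφ, he' _ (hdnil z hz), map_zero]
    let φN : R →+ N :=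
      { toFun := fun z => ⟨φ z, hφmem z⟩
        map_zero' := Subtype.ext (by simp)
        map_add' := fun a b => Subtype.ext (by simp) }
    obtain ⟨Φ, hΦ⟩ := addQuotLift q.1 φN (fun z hz => Subtype.ext (by
      show φ z = 0
      exact hφkill z hz))
    have hΦsl : IsFrobSemilinear p ε (R ⧸ q.1) Φ := by
      intro rq zq
      obtain ⟨r, rfl⟩ := Ideal.Quotient.mk_surjective rq
      obtain ⟨z, rfl⟩ := Ideal.Quotient.mk_surjective zq
      have h1 : (Ideal.Quotient.mk q.1 r) ^ p ^ ε • (Ideal.Quotient.mk q.1 z)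
          = Ideal.Quotient.mk q.1 (r ^ p ^ ε * z) := by
        rw [smul_eq_mul, ← map_pow, ← map_mul]
      rw [h1, hΦ]
      apply Subtype.ext
      rw [Submodule.torsionBySet.mk_smul, SetLike.val_smul, hΦ]
      show φ (r ^ p ^ ε * z) = r • φ z
      have harg2 : (d * (r ^ p ^ ε * z)) ^ p ^ e' = r ^ p ^ e * (d * z) ^ p ^ e' := by
        calc (d * (r ^ p ^ ε * z)) ^ p ^ e' = (r ^ p ^ ε * (d * z)) ^ p ^ e' := by ring
        _ = (r ^ p ^ ε) ^ p ^ e' * (d * z) ^ p ^ e' := mul_pow _ _ _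
        _ = r ^ p ^ e * (d * z) ^ p ^ e' := by
            rw [← pow_mul, ← pow_add, hεe]
      rw [hφ, hφ, harg2, hg']
    have hval : (Φ (Ideal.Quotient.mk q.1 sl) : M) = g ((d * sl) ^ p ^ e') := by
      rw [hΦ]
      show φ sl = _
      rw [hφ]
    have hmemTI : Φ (Ideal.Quotient.mk q.1 sl) ∈ tightInterior p (R ⧸ q.1) N := by
      rw [mem_tightInterior_iff]
      intro c' hc' E
      have hc'0 : c' ≠ 0 := ne_zero_of_mem_RCirc hc'
      obtain ⟨e₂, hE2, hmem2⟩ := hs2 q.1 h𝔭 c' hc'0 E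
      obtain ⟨ψ, hψsl, hψv⟩ := hmem2
      apply Submodule.subset_span
      refine ⟨e₂ + ε, le_trans hE2 (Nat.le_add_right _ _), Φ.comp ψ, sl_comp_mod hψsl hΦsl, ?_⟩
      rw [AddMonoidHom.coe_comp, Function.comp_apply, hψv]
    have hsummand : g ((dd q.1 (hmem𝔭 q) * ss q.1 (hmem𝔭 q)) ^ p ^ e') ∈
        Submodule.span R (Subtype.val ''
          (tightInterior p (R ⧸ q.1) (Submodule.torsionBySet R M ↑q.1) :
            Set (Submodule.torsionBySet R M ↑q.1))) := by
      apply Submodule.subset_span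
      exact ⟨_, hmemTI, hval⟩
    exact le_iSup₂ (f := fun 𝔭 (_ : 𝔭 ∈ minimalPrimes R) => Submodule.span R
      (Subtype.val '' (tightInterior p (R ⧸ 𝔭) (Submodule.torsionBySet R M ↑𝔭) :
        Set (Submodule.torsionBySet R M ↑𝔭)))) q.1 h𝔭 hsummand
  intro x hx
  exact key (mem_tightInterior_iff.mp hx c hcRC e')

end Main

end TIProof

/-- Proposition 2.10 (minimal primes): `M_{*R} = Σᵢ (0 :_M 𝔭ᵢ)_{*(R/𝔭ᵢ)}`. -/
theorem tightInterior_eq_sum_minimalPrimes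
    (p : ℕ) [Fact p.Prime] (R : Type u) [CommRing R] [IsNoetherianRing R] [CharP R p]
    (hred : FFinite p (R ⧸ nilradical R))
    (M : Type v) [AddCommGroup M] [Module R M] :
    tightInterior p R M =
      ⨆ 𝔭 ∈ minimalPrimes R, Submodule.span R
        (Subtype.val '' (tightInterior p (R ⧸ 𝔭) (Submodule.torsionBySet R M ↑𝔭) :
          Set (Submodule.torsionBySet R M ↑𝔭))) := by
  exact le_antisymm (TIProof.subset_lemma p R M hred)
    (iSup₂_le fun 𝔭 h𝔭 => TIProof.supset_lemma p R M h𝔭)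
end

section
/- Let R be a commutative Noetherian ring of prime characteristic p such that R_red is F-finite, and let M be an R-module. Then for every e ≥ 0 one has ^e(M_*) ⊆ (^eM)_{*R}: under the identity map of underlying sets, the tight interior of M is contained in the tight interior of the R-module ^eM. -/
open scoped TensorProduct Pointwise

universe u v w

/-- `Hom_R(S, M)` is an `S`-module via the action of `S` on the source:
`(s • f) x = f (s * x)`. -/
instance homSourceModule (R : Type u) [CommRing R] (S : Type v) [CommRing S] [Algebra R S]
    (M : Type w) [AddCommGroup M] [Module R M] : Module S (S →ₗ[R] M) where
  smul s f := f ∘ₗ LinearMap.mulLeft R s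
  one_smul f := LinearMap.ext fun x => show f (1 * x) = f x by rw [one_mul]
  mul_smul s t f := LinearMap.ext fun x =>
    show f (s * t * x) = f (t * (s * x)) by rw [show s * t * x = t * (s * x) by ring]
  smul_zero s := rfl
  smul_add s f g := rfl
  add_smul s t f := LinearMap.ext fun x =>
    show f ((s + t) * x) = f (s * x) + f (t * x) by rw [add_mul, map_add]
  zero_smul f := LinearMap.ext fun x => show f (0 * x) = 0 by rw [zero_mul, map_zero]

@[simp] lemma homSourceModule_smul_apply {R : Type u} [CommRing R] {S : Type v} [CommRing S]
    [Algebra R S] {M : Type w} [AddCommGroup M] [Module R M] (s : S) (f : S →ₗ[R] M) (x : S) :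
    (s • f) x = f (s * x) := rfl

/-- Post-composition `Hom_R(S, V) → Hom_R(S, W)` with an `R`-linear map `β : V → W`,
as an `S`-linear map for the source `S`-actions. -/
def homComp (R : Type u) [CommRing R] (S : Type v) [CommRing S] [Algebra R S]
    {V : Type*} {W : Type*} [AddCommGroup V] [Module R V] [AddCommGroup W] [Module R W]
    (β : V →ₗ[R] W) : (S →ₗ[R] V) →ₗ[S] (S →ₗ[R] W) where
  toFun f := β ∘ₗ f
  map_add' f g := LinearMap.ext fun x => by simp
  map_smul' s f := rfl

/-- `{}^e M`: the module `M` with `R`-action twisted by the `e`-th iterate of Frobenius. -/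
def FrobM (_p _e : ℕ) (R : Type u) (M : Type v) : Type v := M

instance (p e : ℕ) (R : Type u) (M : Type v) [AddCommGroup M] :
    AddCommGroup (FrobM p e R M) :=
  inferInstanceAs (AddCommGroup M)

noncomputable instance (p e : ℕ) (R : Type u) (M : Type v) [CommRing R] [ExpChar R p]
    [AddCommGroup M] [Module R M] : Module R (FrobM p e R M) :=
  Module.compHom M (iterateFrobenius R p e)

/-- For `R → S` and an `S`-module `M`, an additive map `g : M →+ L` to an `R`-module `L` is
`R`-linear as a map `{}^e M → L` (with `{}^e M` formed over `S` and restricted to `R`) iff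
`g (((algebraMap R S) r) ^ (p ^ e) • x) = r • g x`. -/
def IsFrobSemilinearAlg (p e : ℕ) (R : Type u) (S : Type v) [CommRing R] [CommRing S]
    [Algebra R S] (M : Type w) (L : Type*) [AddCommGroup M] [Module S M]
    [AddCommGroup L] [Module R L] (g : M →+ L) : Prop :=
  ∀ (r : R) (x : M), g ((algebraMap R S r ^ p ^ e) • x) = r • g x

/-- The natural map `S ⊗_R {}^e R → {}^e S`, `s ⊗ {}^e r ↦ {}^e (s^{p^e} · rS)`, on underlying
additive groups. -/
noncomputable def frobBC (p e : ℕ) (R : Type u) (S : Type v) [CommRing R] [CommRing S]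
    [Algebra R S] [Fact p.Prime] [CharP R p] [CharP S p] :
    TensorProduct R S (FrobAlg p e R) →+ S :=
  TensorProduct.liftAddHom
    { toFun := fun s =>
        { toFun := fun r => s ^ p ^ e * algebraMap R S r
          map_zero' := by
            exact (congrArg (s ^ p ^ e * ·) (map_zero (algebraMap R S))).trans (mul_zero _)
          map_add' := fun a b => by
            show s ^ p ^ e * algebraMap R S (a + b) = _
            exact (congrArg (s ^ p ^ e * ·) (map_add (algebraMap R S) (show R from a)
              (show R from b))).trans (mul_add _ _ _) }
      map_zero' := by
        ext r
        show (0 : S) ^ p ^ e * algebraMap R S r = 0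
        rw [zero_pow (pow_ne_zero e (Fact.out : p.Prime).ne_zero), zero_mul]
      map_add' := fun s t => by
        ext r
        show (s + t) ^ p ^ e * algebraMap R S r = _
        rw [add_pow_char_pow, add_mul]
        rfl }
    (fun r s x => by
      show (r • s) ^ p ^ e * algebraMap R S (show R from x)
          = s ^ p ^ e * algebraMap R S (r ^ p ^ e * (show R from x))
      rw [Algebra.smul_def, mul_pow, map_mul, map_pow]
      ring)

/-- Lemma 6.4: `{}^e (M_*) ⊆ ({}^e M)_{*R}`. -/
theorem frob_tightInterior_le
    (p : ℕ) [Fact p.Prime] (R : Type u) [CommRing R] [IsNoetherianRing R] [CharP R p]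
    (hred : FFinite p (R ⧸ nilradical R))
    (M : Type v) [AddCommGroup M] [Module R M] (e : ℕ) :
    ∀ x ∈ tightInterior p R M,
      (show FrobM p e R M from x) ∈ tightInterior p R (FrobM p e R M) := by
  intro x hx
  simp only [tightInterior, Submodule.mem_iInf] at hx
  show (show FrobM p e R M from x) ∈ ⨅ c ∈ RCirc R, ⨅ e₀ : ℕ, tiAux p R (FrobM p e R M) c e₀
  refine (Submodule.mem_iInf (M := FrobM p e R M) _).mpr fun c =>
    (Submodule.mem_iInf (M := FrobM p e R M) _).mpr fun hc =>
    (Submodule.mem_iInf (M := FrobM p e R M) _).mpr fun e₀ => ?_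
  have key : ∀ y ∈ tiAux p R M c e₀, ∀ r : R,
      (show FrobM p e R M from r • y) ∈ tiAux p R (FrobM p e R M) c e₀ := by
    intro y hy
    induction hy using Submodule.span_induction with
    | mem y hy =>
      obtain ⟨e', he', g, hg, rfl⟩ := hy
      intro r
      refine Submodule.subset_span ⟨e + e', he'.trans (Nat.le_add_left _ _),
        (g.comp (AddMonoidHom.mulLeft (r ^ p ^ e')) : R →+ FrobM p e R M), ?_, ?_⟩
      · intro s z
        show g (r ^ p ^ e' * (s ^ p ^ (e + e') • z))
            = (iterateFrobenius R p e s) • g (r ^ p ^ e' * z)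
        rw [iterateFrobenius_def, smul_eq_mul,
          show s ^ p ^ (e + e') = (s ^ p ^ e) ^ p ^ e' by rw [← pow_mul, ← pow_add],
          mul_left_comm]
        simpa [smul_eq_mul] using hg (s ^ p ^ e) (r ^ p ^ e' * z)
      · show r • g c = g (r ^ p ^ e' * c)
        simpa [smul_eq_mul] using (hg r c).symm
    | zero =>
      intro r
      rw [smul_zero]
      exact (tiAux p R (FrobM p e R M) c e₀).zero_mem
    | add a b _ _ ha hb =>
      intro r
      rw [smul_add]
      exact (tiAux p R (FrobM p e R M) c e₀).add_mem (ha r) (hb r)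
    | smul s y _ ih =>
      intro r
      rw [smul_smul]
      exact ih (r * s)
  simpa using key x (hx c hc e₀) 1
end

section
/- Let R be a reduced commutative Noetherian ring (of arbitrary characteristic) with minimal primes 𝔭_1, …, 𝔭_n, normalization R^N, and conductor 𝔠 = Ann_R(R^N/R). Then 𝔠 ⊆ Σ_{i=1}^n Ann_R(𝔭_i), where Ann_R(𝔭_i) = ⋂_{j ≠ i} 𝔭_j. -/
universe u

section Aux

variable {R : Type u} [CommRing R] [IsReduced R]

lemma sInf_minimalPrimes_eq_bot' : sInf (minimalPrimes R) = (⊥ : Ideal R) := by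
  have : sInf (minimalPrimes R) = (⊥ : Ideal R).radical := Ideal.sInf_minimalPrimes
  rwa [show (⊥ : Ideal R).radical = nilradical R from rfl, nilradical_eq_zero] at this

lemma mem_nonZeroDivisors_of_notMem_minimalPrimes {t : R}
    (ht : ∀ 𝔮 ∈ minimalPrimes R, t ∉ 𝔮) : t ∈ nonZeroDivisors R := by
  rw [mem_nonZeroDivisors_iff_right]
  intro y hy
  have hmem : y ∈ sInf (minimalPrimes R) := by
    rw [Ideal.mem_sInf]
    intro 𝔮 h𝔮
    have hp : 𝔮.IsPrime := h𝔮.1.1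
    rcases hp.mem_or_mem (show y * t ∈ 𝔮 by rw [hy]; exact 𝔮.zero_mem) with h | h
    · exact h
    · exact absurd h (ht 𝔮 h𝔮)
  rwa [sInf_minimalPrimes_eq_bot', Ideal.mem_bot] at hmem

lemma key_lemma [IsNoetherianRing R] (𝔭 : Ideal R) (h𝔭 : 𝔭 ∈ minimalPrimes R) (r : R)
    (hr : ∀ y ∈ integralClosure R (FractionRing R),
        algebraMap R (FractionRing R) r * y ∈ Set.range (algebraMap R (FractionRing R))) :
    ∃ a : R, (∀ p ∈ 𝔭, p * a = 0) ∧ r - a ∈ 𝔭 ∧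
      ∀ 𝔮 ∈ minimalPrimes R, 𝔮 ≠ 𝔭 → a ∈ 𝔮 := by
  classical
  have hfin := minimalPrimes.finite_of_isNoetherianRing R
  set S : Finset (Ideal R) := hfin.toFinset with hS
  have hmemS : ∀ 𝔮 : Ideal R, 𝔮 ∈ S ↔ 𝔮 ∈ minimalPrimes R := fun 𝔮 => hfin.mem_toFinset
  have h𝔭S : 𝔭 ∈ S := (hmemS 𝔭).2 h𝔭
  set q : Ideal R := (S.erase 𝔭).inf id with hq
  have hqle : ∀ 𝔮 ∈ minimalPrimes R, 𝔮 ≠ 𝔭 → q ≤ 𝔮 := by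
    intro 𝔮 h1 h2
    exact Finset.inf_le (Finset.mem_erase.2 ⟨h2, (hmemS 𝔮).2 h1⟩)
  -- the ideal 𝔭 ⊔ q is contained in no minimal prime
  have hnotle : ∀ 𝔮 ∈ S, ¬ (𝔭 ⊔ q ≤ 𝔮) := by
    intro 𝔮 h𝔮S hle
    have h𝔮 : 𝔮 ∈ minimalPrimes R := (hmemS 𝔮).1 h𝔮S
    by_cases hEq : 𝔮 = 𝔭
    · subst hEq
      have hqle𝔮 : q ≤ 𝔮 := le_trans le_sup_right hle
      obtain ⟨𝔮', h𝔮'S, h𝔮'le⟩ := (h𝔮.1.1.inf_le').1 hqle𝔮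
      have h𝔮' : 𝔮' ∈ minimalPrimes R := (hmemS 𝔮').1 (Finset.mem_erase.1 h𝔮'S).2
      have : 𝔮 ≤ 𝔮' := h𝔮.2 ⟨h𝔮'.1.1, bot_le⟩ h𝔮'le
      exact (Finset.mem_erase.1 h𝔮'S).1 (le_antisymm h𝔮'le this)
    · have h𝔭le : 𝔭 ≤ 𝔮 := le_trans le_sup_left hle
      have : 𝔮 ≤ 𝔭 := h𝔮.2 ⟨h𝔭.1.1, bot_le⟩ h𝔭le
      exact hEq (le_antisymm this h𝔭le)
  -- prime avoidance: find a nonzerodivisor t = p + s with p ∈ 𝔭, s ∈ q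
  have havoid : ¬ ((𝔭 ⊔ q : Ideal R) : Set R) ⊆ ⋃ 𝔮 ∈ (S : Set (Ideal R)), (𝔮 : Set R) := by
    rw [Ideal.subset_union_prime 𝔭 𝔭 (fun 𝔮 h𝔮 _ _ => ((hmemS 𝔮).1 h𝔮).1.1)]
    rintro ⟨𝔮, h𝔮S, hle⟩
    exact hnotle 𝔮 h𝔮S hle
  obtain ⟨t, htmem, htnot⟩ := Set.not_subset.1 havoid
  have htnot' : ∀ 𝔮 ∈ minimalPrimes R, t ∉ 𝔮 := by
    intro 𝔮 h𝔮 hmem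
    exact htnot (Set.mem_biUnion ((hmemS 𝔮).2 h𝔮) hmem)
  have ht : t ∈ nonZeroDivisors R := mem_nonZeroDivisors_of_notMem_minimalPrimes htnot'
  obtain ⟨p, hp, s, hs, hpst⟩ := Submodule.mem_sup.1 htmem
  -- s annihilates 𝔭
  have hsann : ∀ p' ∈ 𝔭, s * p' = 0 := by
    intro p' hp'
    have hmem : s * p' ∈ sInf (minimalPrimes R) := by
      rw [Ideal.mem_sInf]
      intro 𝔮 h𝔮
      by_cases hEq : 𝔮 = 𝔭
      · subst hEq; exact Ideal.mul_mem_left _ _ hp'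
      · exact Ideal.mul_mem_right _ _ (hqle 𝔮 h𝔮 hEq hs)
    rwa [sInf_minimalPrimes_eq_bot', Ideal.mem_bot] at hmem
  have hst : s * t = s * s := by
    have : s * p = 0 := hsann p hp
    rw [← hpst, mul_add, this, zero_add]
  -- the idempotent e = s / t in the fraction ring
  set K := FractionRing R
  set f : R →+* K := algebraMap R K with hf
  set e : K := IsLocalization.mk' K s (⟨t, ht⟩ : nonZeroDivisors R) with he
  have het : e * f t = f s := IsLocalization.mk'_spec K s ⟨t, ht⟩
  have hunit : IsUnit (f t) := IsLocalization.map_units K ⟨t, ht⟩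
  have hidem : e * e = e := by
    have h1 : (e * e) * (f t * f t) = e * (f t * f t) := by
      calc (e * e) * (f t * f t) = (e * f t) * (e * f t) := by ring
        _ = f s * f s := by rw [het]
        _ = f (s * s) := by rw [map_mul]
        _ = f (s * t) := by rw [hst]
        _ = f s * f t := by rw [map_mul]
        _ = (e * f t) * f t := by rw [het]
        _ = e * (f t * f t) := by ring
    exact (hunit.mul hunit).mul_right_cancel h1
  have hint : e ∈ integralClosure R K := by
    refine ⟨(Polynomial.X - Polynomial.C 1) * Polynomial.X,
      (Polynomial.monic_X_sub_C 1).mul Polynomial.monic_X, ?_⟩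
    simp only [Polynomial.eval₂_mul, Polynomial.eval₂_sub, Polynomial.eval₂_X,
      Polynomial.eval₂_one, Polynomial.eval₂_C, map_one]
    rw [sub_mul, one_mul, hidem, sub_self]
  obtain ⟨a, ha⟩ := hr e hint
  have hinj : Function.Injective f := IsFractionRing.injective R K
  have hat : a * t = r * s := by
    apply hinj
    rw [map_mul, map_mul, ha, mul_assoc, het]
  refine ⟨a, ?_, ?_, ?_⟩
  · intro p' hp'
    apply mem_nonZeroDivisors_iff_right.1 ht
    have : (p' * a) * t = r * (s * p') := by
      calc (p' * a) * t = (a * t) * p' := by ring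
        _ = (r * s) * p' := by rw [hat]
        _ = r * (s * p') := by ring
    rw [this, hsann p' hp', mul_zero]
  · have h1 : (r - a) * t = r * p := by
      rw [sub_mul, hat, ← hpst, mul_add]; ring
    have hprime : 𝔭.IsPrime := h𝔭.1.1
    rcases hprime.mem_or_mem (show (r - a) * t ∈ 𝔭 by rw [h1]; exact Ideal.mul_mem_left _ _ hp)
      with h | h
    · exact h
    · exact absurd h (htnot' 𝔭 h𝔭)
  · intro 𝔮 h𝔮 hne
    have hprime : 𝔮.IsPrime := h𝔮.1.1
    have hmem : a * t ∈ 𝔮 := by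
      rw [hat]; exact Ideal.mul_mem_left _ _ (hqle 𝔮 h𝔮 hne hs)
    rcases hprime.mem_or_mem hmem with h | h
    · exact h
    · exact absurd h (htnot' 𝔮 h𝔮)

end Aux

/-- Proposition 7.4: for a reduced Noetherian ring, the conductor into the normalization is
contained in the sum of the annihilators of the minimal primes. -/
theorem conductor_subset_sum_ann
    (R : Type u) [CommRing R] [IsNoetherianRing R] [IsReduced R] :
    {r : R | ∀ y ∈ integralClosure R (FractionRing R),
        algebraMap R (FractionRing R) r * y ∈ Set.range (algebraMap R (FractionRing R))}
      ⊆ ↑(⨆ 𝔭 ∈ minimalPrimes R, Submodule.torsionBySet R R ↑𝔭) := by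
  classical
  intro r hr
  have hfin := minimalPrimes.finite_of_isNoetherianRing R
  set S : Finset (Ideal R) := hfin.toFinset with hS
  have hmemS : ∀ 𝔮 : Ideal R, 𝔮 ∈ S ↔ 𝔮 ∈ minimalPrimes R := fun 𝔮 => hfin.mem_toFinset
  have key' : ∀ 𝔭 : Ideal R, ∃ a : R, 𝔭 ∈ minimalPrimes R →
      ((∀ p ∈ 𝔭, p * a = 0) ∧ r - a ∈ 𝔭 ∧ ∀ 𝔮 ∈ minimalPrimes R, 𝔮 ≠ 𝔭 → a ∈ 𝔮) := by
    intro 𝔭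
    by_cases h : 𝔭 ∈ minimalPrimes R
    · obtain ⟨a, h1, h2, h3⟩ := key_lemma 𝔭 h r hr
      exact ⟨a, fun _ => ⟨h1, h2, h3⟩⟩
    · exact ⟨0, fun h' => absurd h' h⟩
  choose a ha using key'
  have hsum : r = ∑ 𝔭 ∈ S, a 𝔭 := by
    have hmem : r - ∑ 𝔭 ∈ S, a 𝔭 ∈ sInf (minimalPrimes R) := by
      rw [Ideal.mem_sInf]
      intro 𝔭₀ h𝔭₀
      have h𝔭₀S : 𝔭₀ ∈ S := (hmemS 𝔭₀).2 h𝔭₀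
      rw [← Finset.add_sum_erase S a h𝔭₀S]
      have h1 : r - (a 𝔭₀ + ∑ 𝔭 ∈ S.erase 𝔭₀, a 𝔭)
          = (r - a 𝔭₀) - ∑ 𝔭 ∈ S.erase 𝔭₀, a 𝔭 := by ring
      rw [h1]
      apply Ideal.sub_mem
      · exact (ha 𝔭₀ h𝔭₀).2.1
      · apply Ideal.sum_mem
        intro 𝔮 h𝔮
        obtain ⟨hne, h𝔮S⟩ := Finset.mem_erase.1 h𝔮
        exact (ha 𝔮 ((hmemS 𝔮).1 h𝔮S)).2.2 𝔭₀ h𝔭₀ (Ne.symm hne)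
    rw [sInf_minimalPrimes_eq_bot', Ideal.mem_bot, sub_eq_zero] at hmem
    exact hmem
  rw [SetLike.mem_coe, hsum]
  apply Submodule.sum_mem
  intro 𝔮 h𝔮S
  have h𝔮 : 𝔮 ∈ minimalPrimes R := (hmemS 𝔮).1 h𝔮S
  apply Submodule.mem_iSup_of_mem 𝔮
  apply Submodule.mem_iSup_of_mem h𝔮
  rw [Submodule.mem_torsionBySet_iff]
  rintro ⟨p, hp⟩
  exact (ha 𝔮 h𝔮).1 p hp
end
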